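/- arXiv:1412.7211 — 4 statements merged into one kernel-verified Lean document; each statement's English description precedes it below -/
import Mathlib

section
/- The ordered monomials x^i ∂^j (i, j ≥ 0) form a linear basis of D_q(C); in particular D_q(C) is isomorphic as a vector space to the polynomial ring ℂ[x,∂]. -/
/-!
`Dq q` is the ℂ-algebra of q-difference operators on ℂ, generated by `x` and `∂`
subject to the relation `∂x = q²x∂ + (q²−1)`.  `Dα` is the Euler operator `α = 1 + x∂`.
-/

noncomputable section

/-- The defining relation of `D_q(ℂ)`: `∂ * x = q² • (x * ∂) + (q² - 1) • 1`.
Here the generator `false` is `x` and `true` is `∂`. -/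
inductive DqRel (q : ℂ) : FreeAlgebra ℂ Bool → FreeAlgebra ℂ Bool → Prop
  | rel : DqRel q (FreeAlgebra.ι ℂ true * FreeAlgebra.ι ℂ false)
      ((q ^ 2) • (FreeAlgebra.ι ℂ false * FreeAlgebra.ι ℂ true)
        + (q ^ 2 - 1) • (1 : FreeAlgebra ℂ Bool))

/-- The algebra `D_q(ℂ)` of q-difference operators on `ℂ`. -/
abbrev Dq (q : ℂ) : Type := RingQuot (DqRel q)

/-- The generator `x` of `D_q(ℂ)`. -/
def Dx (q : ℂ) : Dq q := RingQuot.mkAlgHom ℂ (DqRel q) (FreeAlgebra.ι ℂ false)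

/-- The generator `∂` of `D_q(ℂ)`. -/
def Dd (q : ℂ) : Dq q := RingQuot.mkAlgHom ℂ (DqRel q) (FreeAlgebra.ι ℂ true)

/-- The Euler operator `α = 1 + x∂`. -/
def Dα (q : ℂ) : Dq q := 1 + Dx q * Dd q

namespace DqPBW


lemma dq_rel (q : ℂ) : Dd q * Dx q = (q ^ 2) • (Dx q * Dd q) + (q ^ 2 - 1) • 1 := by
  have := RingQuot.mkAlgHom_rel ℂ (DqRel.rel (q := q))
  simpa [Dx, Dd, map_mul, map_add, map_smul, map_one] using this

abbrev V : Type := (ℕ × ℕ) →₀ ℂ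

def wD (q : ℂ) (p : ℕ × ℕ) : V :=
  (q ^ (2 * p.1)) • Finsupp.single (p.1, p.2 + 1) 1
    + (q ^ (2 * p.1) - 1) • Finsupp.single (p.1 - 1, p.2) 1

def opD (q : ℂ) : V →ₗ[ℂ] V :=
  Finsupp.lsum ℂ fun p => LinearMap.toSpanSingleton ℂ V (wD q p)

def opX : V →ₗ[ℂ] V :=
  Finsupp.lsum ℂ fun p => LinearMap.toSpanSingleton ℂ V (Finsupp.single (p.1 + 1, p.2) 1)

lemma opD_single (q : ℂ) (p : ℕ × ℕ) (c : ℂ) :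
    opD q (Finsupp.single p c) = c • wD q p := by
  simp [opD, LinearMap.toSpanSingleton_apply]

lemma opX_single (p : ℕ × ℕ) (c : ℂ) :
    opX (Finsupp.single p c) = c • Finsupp.single (p.1 + 1, p.2) 1 := by
  simp [opX, LinearMap.toSpanSingleton_apply]

lemma op_rel (q : ℂ) :
    (opD q).comp opX = (q ^ 2) • (opX.comp (opD q)) + (q ^ 2 - 1) • LinearMap.id := by
  apply Finsupp.lhom_ext
  intro p c
  obtain ⟨i, j⟩ := p
  simp only [LinearMap.comp_apply, opX_single, opD_single, LinearMap.add_apply,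
    LinearMap.smul_apply, LinearMap.id_apply, map_smul, wD]
  rw [show Finsupp.single ((i, j) : ℕ × ℕ) c = c • Finsupp.single (i, j) (1:ℂ) by
    simp [Finsupp.smul_single]]
  cases i with
  | zero =>
    simp only [Nat.zero_sub, Nat.mul_zero, pow_zero, sub_self, zero_smul, smul_zero,
      add_zero, one_smul, map_add, map_smul, opX_single, smul_smul, Nat.mul_one, smul_add]
    module
  | succ i =>
    simp only [Nat.add_sub_cancel, smul_add, smul_smul, map_add, map_smul, opX_single]
    rw [show (2 * (i + 1 + 1)) = 2 * (i + 1) + 2 by ring, show (2 * (i + 1)) = 2 * i + 2 by ring]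
    ring_nf
    module

/-- The representation of `Dq q` on `V`. -/
def ρ (q : ℂ) : Dq q →ₐ[ℂ] Module.End ℂ V :=
  RingQuot.liftAlgHom ℂ ⟨FreeAlgebra.lift ℂ (fun b => if b then opD q else opX), by
    rintro _ _ ⟨⟩
    simp only [map_mul, map_add, map_smul, map_one, FreeAlgebra.lift_ι_apply,
      if_true, if_false]
    exact op_rel q⟩

lemma ρ_x (q : ℂ) : ρ q (Dx q) = opX := by
  simp [ρ, Dx, RingQuot.liftAlgHom_mkAlgHom_apply]

lemma ρ_d (q : ℂ) : ρ q (Dd q) = opD q := by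
  simp [ρ, Dd, RingQuot.liftAlgHom_mkAlgHom_apply]

def φ (q : ℂ) : Dq q →ₗ[ℂ] V where
  toFun a := ρ q a (Finsupp.single (0, 0) 1)
  map_add' a b := by simp [map_add]
  map_smul' c a := by simp [map_smul]

def mono (q : ℂ) (ij : ℕ × ℕ) : Dq q := Dx q ^ ij.1 * Dd q ^ ij.2

lemma opD_pow (q : ℂ) (j : ℕ) :
    ((opD q) ^ j) (Finsupp.single (0, 0) 1) = Finsupp.single (0, j) 1 := by
  induction j with
  | zero => simp
  | succ j ih =>
    rw [pow_succ', Module.End.mul_apply, ih, opD_single]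
    simp [wD]

lemma opX_pow (i k j : ℕ) :
    ((opX) ^ i) (Finsupp.single (k, j) 1) = Finsupp.single (k + i, j) 1 := by
  induction i with
  | zero => simp
  | succ i ih =>
    rw [pow_succ', Module.End.mul_apply, ih, opX_single]
    simp only [one_smul]
    congr 2

lemma φ_mono (q : ℂ) (ij : ℕ × ℕ) : φ q (mono q ij) = Finsupp.single ij 1 := by
  obtain ⟨i, j⟩ := ij
  simp only [φ, mono, LinearMap.coe_mk, AddHom.coe_mk, map_mul, map_pow, ρ_x, ρ_d,
    Module.End.mul_apply]
  rw [opD_pow, opX_pow]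
  simp

lemma mono_li (q : ℂ) : LinearIndependent ℂ (mono q) := by
  apply LinearIndependent.of_comp (φ q)
  have : (⇑(φ q) ∘ mono q) = fun p : ℕ × ℕ => Finsupp.single p (1 : ℂ) := by
    funext p; exact φ_mono q p
  rw [this]
  simpa using (Finsupp.basisSingleOne (R := ℂ) (ι := ℕ × ℕ)).linearIndependent

lemma x_mul_mono (q : ℂ) (i j : ℕ) :
    Dx q * mono q (i, j) = mono q (i + 1, j) := by
  simp only [mono]
  rw [← mul_assoc, ← pow_succ']

lemma dd_mul_xpow (q : ℂ) (i : ℕ) :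
    Dd q * Dx q ^ (i + 1)
      = ((q ^ 2) ^ (i + 1)) • (Dx q ^ (i + 1) * Dd q)
        + ((q ^ 2) ^ (i + 1) - 1) • Dx q ^ i := by
  induction i with
  | zero => simpa using dq_rel q
  | succ i ih =>
    rw [pow_succ (Dx q), ← mul_assoc, ih, add_mul, smul_mul_assoc, smul_mul_assoc,
      mul_assoc, dq_rel, mul_add, mul_smul_comm, mul_smul_comm, mul_one,
      ← mul_assoc, ← pow_succ, smul_add, smul_smul, smul_smul]
    rw [← pow_succ (Dx q)]
    module

lemma one_mem_S (q : ℂ) : (1 : Dq q) ∈ Submodule.span ℂ (Set.range (mono q)) := by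
  have : (1 : Dq q) = mono q (0, 0) := by simp [mono]
  rw [this]
  exact Submodule.subset_span ⟨(0, 0), rfl⟩

lemma dd_mul_mono (q : ℂ) (i j : ℕ) :
    Dd q * mono q (i, j) ∈ Submodule.span ℂ (Set.range (mono q)) := by
  cases i with
  | zero =>
    have : Dd q * mono q (0, j) = mono q (0, j + 1) := by
      simp only [mono, pow_zero, one_mul]
      rw [← pow_succ']
    rw [this]
    exact Submodule.subset_span ⟨(0, j + 1), rfl⟩
  | succ i =>
    have : Dd q * mono q (i + 1, j)
        = ((q ^ 2) ^ (i + 1)) • mono q (i + 1, j + 1)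
          + ((q ^ 2) ^ (i + 1) - 1) • mono q (i, j) := by
      simp only [mono]
      rw [← mul_assoc, dd_mul_xpow, add_mul, smul_mul_assoc, smul_mul_assoc, mul_assoc,
        ← pow_succ']
    rw [this]
    exact Submodule.add_mem _
      (Submodule.smul_mem _ _ (Submodule.subset_span ⟨(i + 1, j + 1), rfl⟩))
      (Submodule.smul_mem _ _ (Submodule.subset_span ⟨(i, j), rfl⟩))

lemma gen_mul_mem (q : ℂ) (b : Bool) (s : Dq q)
    (hs : s ∈ Submodule.span ℂ (Set.range (mono q))) :
    RingQuot.mkAlgHom ℂ (DqRel q) (FreeAlgebra.ι ℂ b) * s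
      ∈ Submodule.span ℂ (Set.range (mono q)) := by
  induction hs using Submodule.span_induction with
  | mem s hs =>
    obtain ⟨⟨i, j⟩, rfl⟩ := hs
    cases b with
    | false =>
      rw [show RingQuot.mkAlgHom ℂ (DqRel q) (FreeAlgebra.ι ℂ false) = Dx q from rfl,
        x_mul_mono]
      exact Submodule.subset_span ⟨(i + 1, j), rfl⟩
    | true =>
      exact dd_mul_mono q i j
  | zero => simp
  | add u v _ _ hu hv => rw [mul_add]; exact Submodule.add_mem _ hu hv
  | smul c u _ hu => rw [mul_smul_comm]; exact Submodule.smul_mem _ _ hu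

lemma mono_span (q : ℂ) : ⊤ ≤ Submodule.span ℂ (Set.range (mono q)) := by
  intro u _
  obtain ⟨a, rfl⟩ := RingQuot.mkAlgHom_surjective ℂ (DqRel q) u
  have key : ∀ a : FreeAlgebra ℂ Bool, ∀ s ∈ Submodule.span ℂ (Set.range (mono q)),
      RingQuot.mkAlgHom ℂ (DqRel q) a * s ∈ Submodule.span ℂ (Set.range (mono q)) := by
    intro a
    induction a with
    | grade0 r =>
      intro s hs
      rw [AlgHom.commutes, ← Algebra.smul_def]
      exact Submodule.smul_mem _ _ hs
    | grade1 b => exact gen_mul_mem q b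
    | mul a b ha hb =>
      intro s hs
      rw [map_mul, mul_assoc]
      exact ha _ (hb s hs)
    | add a b ha hb =>
      intro s hs
      rw [map_add, add_mul]
      exact Submodule.add_mem _ (ha s hs) (hb s hs)
  have := key a 1 (one_mem_S q)
  rwa [mul_one] at this

end DqPBW

/-- the ordered monomials `x^i ∂^j` form a ℂ-basis of `D_q(ℂ)`;
in particular `D_q(ℂ)` is isomorphic as a vector space to the polynomial ring in
two variables. -/
theorem dq_pbw_basis (q : ℂ) (hq : q ≠ 0) :
    (∃ b : Module.Basis (ℕ × ℕ) ℂ (Dq q), ∀ ij : ℕ × ℕ, b ij = (Dx q) ^ ij.1 * (Dd q) ^ ij.2) ∧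
    Nonempty (Dq q ≃ₗ[ℂ] MvPolynomial (Fin 2) ℂ) := by
  classical
  refine ⟨⟨Module.Basis.mk (DqPBW.mono_li q) (DqPBW.mono_span q), ?_⟩, ?_⟩
  · intro ij
    rw [Module.Basis.mk_apply]
    rfl
  · exact ⟨(Module.Basis.mk (DqPBW.mono_li q) (DqPBW.mono_span q)).equiv
      (MvPolynomial.basisMonomials (Fin 2) ℂ)
      ((finTwoArrowEquiv ℕ).symm.trans Finsupp.equivFunOnFinite.symm)⟩
end
end

section
/- If q is a primitive ℓ-th root of unity in ℂ with ℓ > 1 odd, then x^ℓ and ∂^ℓ are central in D_q(C). -/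
/-!
`Dq q` is the ℂ-algebra of q-difference operators on ℂ, generated by `x` and `∂`
subject to the relation `∂x = q²x∂ + (q²−1)`.  `Dα` is the Euler operator `α = 1 + x∂`.
-/

noncomputable section

lemma Dq_rel (q : ℂ) :
    Dd q * Dx q = (q ^ 2) • (Dx q * Dd q) + (q ^ 2 - 1) • (1 : Dq q) := by
  unfold Dd Dx
  rw [← map_mul, RingQuot.mkAlgHom_rel ℂ DqRel.rel]
  simp [map_add, map_mul]

lemma Dq_aux1 (q : ℂ) (n : ℕ) :
    Dd q * (Dx q) ^ (n + 1)
      = (q ^ (2 * (n + 1))) • ((Dx q) ^ (n + 1) * Dd q)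
        + (q ^ (2 * (n + 1)) - 1) • (Dx q) ^ n := by
  induction n with
  | zero => simpa using Dq_rel q
  | succ m ih =>
    have : Dd q * (Dx q) ^ (m + 2) = (Dd q * (Dx q) ^ (m + 1)) * Dx q := by
      rw [pow_succ, ← mul_assoc]
    rw [this, ih, add_mul, smul_mul_assoc, smul_mul_assoc, mul_assoc, Dq_rel q]
    simp only [mul_add, mul_smul_comm, smul_add, smul_smul, mul_one, ← mul_assoc, ← pow_succ]
    match_scalars <;> ring

lemma Dq_aux2 (q : ℂ) (n : ℕ) :
    (Dd q) ^ (n + 1) * Dx q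
      = (q ^ (2 * (n + 1))) • (Dx q * (Dd q) ^ (n + 1))
        + (q ^ (2 * (n + 1)) - 1) • (Dd q) ^ n := by
  induction n with
  | zero => simpa using Dq_rel q
  | succ m ih =>
    have : (Dd q) ^ (m + 2) * Dx q = Dd q * ((Dd q) ^ (m + 1) * Dx q) := by
      rw [pow_succ', mul_assoc]
    rw [this, ih, mul_add, mul_smul_comm, mul_smul_comm, ← mul_assoc, Dq_rel q]
    simp only [add_mul, smul_mul_assoc, smul_add, smul_smul, one_mul, mul_assoc, ← pow_succ']
    match_scalars <;> ring

lemma Dq_mem_center (q : ℂ) (a : Dq q)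
    (h1 : Dx q * a = a * Dx q) (h2 : Dd q * a = a * Dd q) :
    a ∈ Subalgebra.center ℂ (Dq q) := by
  rw [Subalgebra.mem_center_iff]
  intro b
  obtain ⟨p, rfl⟩ := RingQuot.mkAlgHom_surjective ℂ (DqRel q) b
  induction p using FreeAlgebra.induction with
  | grade0 r => simp [Algebra.commutes]
  | grade1 i =>
    cases i
    · exact h1
    · exact h2
  | mul u v hu hv => rw [map_mul, mul_assoc, hv, ← mul_assoc, hu, mul_assoc]
  | add u v hu hv => rw [map_add, add_mul, mul_add, hu, hv]

/-- if `q` is a primitive ℓ-th root of unity with `ℓ > 1` odd, then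
`x^ℓ` and `∂^ℓ` are central in `D_q(ℂ)`. -/
theorem dq_powers_central (q : ℂ) (ℓ : ℕ) (hℓ : 1 < ℓ) (hodd : Odd ℓ)
    (hq : IsPrimitiveRoot q ℓ) :
    (Dx q) ^ ℓ ∈ Subalgebra.center ℂ (Dq q) ∧
    (Dd q) ^ ℓ ∈ Subalgebra.center ℂ (Dq q) := by
  obtain ⟨m, rfl⟩ : ∃ m, ℓ = m + 1 := ⟨ℓ - 1, by omega⟩
  have hq1 : q ^ (2 * (m + 1)) = 1 := by
    rw [mul_comm, pow_mul, hq.pow_eq_one, one_pow]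
  constructor
  · refine Dq_mem_center q _ ?_ ?_
    · rw [← pow_succ', ← pow_succ]
    · rw [Dq_aux1 q m, hq1, one_smul, sub_self, zero_smul, add_zero]
  · refine Dq_mem_center q _ ?_ ?_
    · rw [Dq_aux2 q m, hq1, one_smul, sub_self, zero_smul, add_zero]
    · rw [← pow_succ', ← pow_succ]
end
end

section
/- If q is a primitive ℓ-th root of unity with ℓ > 1 odd, then in D_q(C) the Euler operator α = 1 + x∂ satisfies α^ℓ = 1 + x^ℓ ∂^ℓ. -/
/-!
`Dq q` is the ℂ-algebra of q-difference operators on ℂ, generated by `x` and `∂`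
subject to the relation `∂x = q²x∂ + (q²−1)`.  `Dα` is the Euler operator `α = 1 + x∂`.
-/

noncomputable section

lemma dq_rel (q : ℂ) : Dd q * Dx q = (q^2) • (Dx q * Dd q) + (q^2 - 1) • 1 := by
  have h := RingQuot.mkAlgHom_rel ℂ (DqRel.rel (q := q))
  simpa [Dd, Dx, map_mul, map_smul, map_add, map_one] using h

lemma dq_alpha_x (q : ℂ) : Dα q * Dx q = (q^2) • (Dx q * Dα q) := by
  unfold Dα
  rw [add_mul, one_mul, mul_assoc, dq_rel]
  simp only [mul_add, mul_smul_comm, mul_one, smul_add, sub_smul, one_smul, add_mul]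
  module

lemma dq_d_alpha (q : ℂ) : Dd q * Dα q = (q^2) • (Dα q * Dd q) := by
  unfold Dα
  rw [mul_add, mul_one, ← mul_assoc, dq_rel]
  simp only [add_mul, smul_mul_assoc, one_mul, mul_assoc, smul_add, mul_add, mul_one]
  module

lemma dq_x_alpha (q c : ℂ) (hc : c * q^2 = 1) :
    Dx q * Dα q = c • (Dα q * Dx q) := by
  rw [dq_alpha_x, smul_smul, hc, one_smul]

lemma dq_xpow_alpha (q c : ℂ) (hc : c * q^2 = 1) (n : ℕ) :
    Dx q ^ n * Dα q = c ^ n • (Dα q * Dx q ^ n) := by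
  induction n with
  | zero => simp
  | succ n ih =>
    rw [pow_succ, mul_assoc, dq_x_alpha q c hc, mul_smul_comm, ← mul_assoc, ih,
      smul_mul_assoc, smul_smul, mul_assoc, pow_succ]
    ring_nf

lemma dq_key (q c : ℂ) (hc : c * q^2 = 1) (n : ℕ) :
    Dx q ^ (n+1) * Dd q ^ (n+1) = (c ^ n • Dα q - 1) * (Dx q ^ n * Dd q ^ n) := by
  have hxd : Dx q * Dd q = Dα q - 1 := by rw [Dα]; abel
  calc Dx q ^ (n+1) * Dd q ^ (n+1)
      = Dx q ^ n * ((Dx q * Dd q) * Dd q ^ n) := by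
        rw [pow_succ, pow_succ']; noncomm_ring
    _ = (Dx q ^ n * Dα q - Dx q ^ n) * Dd q ^ n := by
        rw [hxd]; simp only [sub_mul, mul_sub, one_mul, mul_one, mul_assoc]
    _ = (c ^ n • Dα q - 1) * (Dx q ^ n * Dd q ^ n) := by
        rw [dq_xpow_alpha q c hc, sub_mul, sub_mul, one_mul, smul_mul_assoc,
          smul_mul_assoc, mul_assoc]

open Polynomial in
lemma dq_prod (q c : ℂ) (hc : c * q^2 = 1) (n : ℕ) :
    Dx q ^ n * Dd q ^ n
      = Polynomial.aeval (Dα q) (∏ j ∈ Finset.range n, (C (c ^ j) * X - 1)) := by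
  induction n with
  | zero => simp
  | succ n ih =>
    rw [Finset.prod_range_succ, mul_comm, map_mul, dq_key q c hc, ih]
    congr 1
    simp [Algebra.smul_def]

open Polynomial in
lemma poly_prod (ℓ : ℕ) (hℓ : 1 < ℓ) (hodd : Odd ℓ) (c : ℂ)
    (hc : IsPrimitiveRoot c ℓ) :
    ∏ j ∈ Finset.range ℓ, (C (c ^ j) * X - 1) = X ^ ℓ - 1 := by
  obtain ⟨k, hk⟩ := hodd
  set c' : ℂ := c ^ (ℓ - 1) with hc'def
  have hcℓ : c ^ ℓ = 1 := hc.pow_eq_one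
  have hcc' : ∀ j : ℕ, c ^ j * c' ^ j = 1 := by
    intro j
    rw [hc'def, ← pow_mul, ← pow_add]
    have h1 : j + (ℓ - 1) * j = ℓ * j := by
      have h2 : ℓ - 1 + 1 = ℓ := by omega
      calc j + (ℓ - 1) * j = ((ℓ - 1) + 1) * j := by ring
        _ = ℓ * j := by rw [h2]
    rw [h1, pow_mul, hcℓ, one_pow]
  have hc' : IsPrimitiveRoot c' ℓ := by
    apply hc.pow_of_coprime
    have h2 : ℓ - 1 + 1 = ℓ := by omega
    rw [← h2]
    simp [Nat.Coprime]
  have hfac : ∀ j : ℕ, C (c ^ j) * X - 1 = C (c ^ j) * (X - C (c' ^ j)) := by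
    intro j
    rw [mul_sub, ← C_mul, hcc', map_one]
  calc ∏ j ∈ Finset.range ℓ, (C (c ^ j) * X - 1)
      = (∏ j ∈ Finset.range ℓ, C (c ^ j)) *
          ∏ j ∈ Finset.range ℓ, (X - C (c' ^ j)) := by
        rw [← Finset.prod_mul_distrib]
        exact Finset.prod_congr rfl fun j _ => hfac j
    _ = X ^ ℓ - 1 := by
        have h1 : (∏ j ∈ Finset.range ℓ, C (c ^ j) : ℂ[X]) = 1 := by
          rw [← map_prod, Finset.prod_pow_eq_pow_sum]
          have hsum : ∑ j ∈ Finset.range ℓ, j = ℓ * k := by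
            have h2 := Finset.sum_range_id_mul_two ℓ
            have h3 : ℓ * (ℓ - 1) = ℓ * k * 2 := by
              rw [hk]; simp [Nat.add_sub_cancel]; ring
            exact Nat.eq_of_mul_eq_mul_right (by norm_num) (h2.trans h3)
          rw [hsum, pow_mul, hcℓ, one_pow, map_one]
        have h2 := X_pow_sub_C_eq_prod hc' (by omega : 0 < ℓ) (one_pow ℓ)
        simp only [mul_one] at h2
        rw [h1, one_mul, ← h2, map_one]

/-- if `q` is a primitive ℓ-th root of unity with `ℓ > 1` odd, then the
Euler operator `α = 1 + x∂` satisfies `α^ℓ = 1 + x^ℓ ∂^ℓ` in `D_q(ℂ)`. -/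
theorem dq_euler_power (q : ℂ) (ℓ : ℕ) (hℓ : 1 < ℓ) (hodd : Odd ℓ)
    (hq : IsPrimitiveRoot q ℓ) :
    (Dα q) ^ ℓ = 1 + (Dx q) ^ ℓ * (Dd q) ^ ℓ := by
  set c : ℂ := q ^ (2 * (ℓ - 1)) with hcdef
  have hqℓ : q ^ ℓ = 1 := hq.pow_eq_one
  have hc : c * q ^ 2 = 1 := by
    rw [hcdef, ← pow_add]
    have : 2 * (ℓ - 1) + 2 = ℓ * 2 := by omega
    rw [this, pow_mul, hqℓ, one_pow]
  have hcprim : IsPrimitiveRoot c ℓ := by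
    apply hq.pow_of_coprime
    apply Nat.Coprime.mul
    · exact Nat.coprime_two_left.2 hodd
    · have h2 : ℓ - 1 + 1 = ℓ := by omega
      rw [← h2]
      simp [Nat.Coprime]
  have h := dq_prod q c hc ℓ
  rw [poly_prod ℓ hℓ hodd c hcprim] at h
  simp only [map_sub, map_pow, Polynomial.aeval_X, map_one] at h
  rw [h]
  abel
end
end

section
/- If q is a primitive ℓ-th root of unity with ℓ > 1 odd, then D_q(C) is a free module of rank ℓ² over its center ℂ[x^ℓ, ∂^ℓ], with basis the ordered monomials xᵐ∂ᵏ for 0 ≤ m, k ≤ ℓ−1. -/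
/-!
`Dq q` is the ℂ-algebra of q-difference operators on ℂ, generated by `x` and `∂`
subject to the relation `∂x = q²x∂ + (q²−1)`.  `Dα` is the Euler operator `α = 1 + x∂`.
-/

noncomputable section

open Finsupp

abbrev MM : Type := (ℕ × ℕ) →₀ ℂ

def Xop : MM →ₗ[ℂ] MM := Finsupp.lmapDomain ℂ ℂ (fun p => (p.1 + 1, p.2))

def Dop (q : ℂ) : MM →ₗ[ℂ] MM :=
  Finsupp.lsum ℂ fun p => LinearMap.toSpanSingleton ℂ MM
    (q ^ (2 * p.1) • Finsupp.single (p.1, p.2 + 1) 1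
      + (q ^ (2 * p.1) - 1) • Finsupp.single (p.1 - 1, p.2) 1)

lemma Xop_single (a b : ℕ) (c : ℂ) :
    Xop (Finsupp.single (a, b) c) = Finsupp.single (a + 1, b) c := by
  simp only [Xop, Finsupp.lmapDomain_apply, Finsupp.mapDomain_single]

lemma Dop_single (q : ℂ) (a b : ℕ) (c : ℂ) :
    Dop q (Finsupp.single (a, b) c)
      = (c * q ^ (2 * a)) • Finsupp.single (a, b + 1) 1
        + (c * (q ^ (2 * a) - 1)) • Finsupp.single (a - 1, b) 1 := by
  rw [Dop, Finsupp.lsum_single, LinearMap.toSpanSingleton_apply, smul_add,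
    smul_smul, smul_smul]

lemma rel_holds (q : ℂ) :
    (Dop q) ∘ₗ Xop = q ^ 2 • (Xop ∘ₗ Dop q) + (q ^ 2 - 1) • LinearMap.id := by
  refine Finsupp.lhom_ext fun p c => ?_
  rcases p with ⟨a, b⟩
  simp only [LinearMap.comp_apply, LinearMap.add_apply, LinearMap.smul_apply,
    LinearMap.id_apply]
  rw [Xop_single, Dop_single, Dop_single, map_add, map_smul, map_smul, Xop_single]
  have hs : (Finsupp.single (a, b) c : MM) = c • Finsupp.single (a, b) 1 := by
    rw [Finsupp.smul_single', mul_one]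
  rw [hs]
  rcases a with _ | a
  · rw [Xop_single]
    match_scalars <;> ring
  · rw [Xop_single]
    have h1 : a + 1 - 1 + 1 = a + 1 := by omega
    have h2 : a + 1 + 1 - 1 = a + 1 := rfl
    rw [h1, h2]
    match_scalars <;> ring


lemma rel_compat (q : ℂ) : ∀ ⦃u v : FreeAlgebra ℂ Bool⦄, DqRel q u v →
    (FreeAlgebra.lift ℂ (fun b => if b then Dop q else Xop)) u
      = (FreeAlgebra.lift ℂ (fun b => if b then Dop q else Xop)) v := by
  rintro u v ⟨⟩
  simp only [map_mul, map_add, map_smul, map_one, FreeAlgebra.lift_ι_apply,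
    if_true, if_false]
  exact rel_holds q

def ψ (q : ℂ) : Dq q →ₐ[ℂ] Module.End ℂ MM :=
  RingQuot.liftAlgHom ℂ ⟨FreeAlgebra.lift ℂ (fun b => if b then Dop q else Xop),
    rel_compat q⟩

lemma ψ_Dx (q : ℂ) : ψ q (Dx q) = Xop := by
  rw [ψ, Dx, RingQuot.liftAlgHom_mkAlgHom_apply, FreeAlgebra.lift_ι_apply, if_neg]
  simp

lemma ψ_Dd (q : ℂ) : ψ q (Dd q) = Dop q := by
  rw [ψ, Dd, RingQuot.liftAlgHom_mkAlgHom_apply, FreeAlgebra.lift_ι_apply, if_pos rfl]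

def Φ (q : ℂ) : Dq q →ₗ[ℂ] MM where
  toFun u := ψ q u (Finsupp.single (0, 0) 1)
  map_add' u v := by simp [map_add]
  map_smul' c u := by simp

def mon (q : ℂ) (p : ℕ × ℕ) : Dq q := Dx q ^ p.1 * Dd q ^ p.2

lemma Dop_pow (q : ℂ) (b c : ℕ) :
    (Dop q ^ b) (Finsupp.single (0, c) 1) = Finsupp.single (0, c + b) 1 := by
  induction b generalizing c with
  | zero => simp
  | succ n ih =>
      rw [pow_succ', Module.End.mul_apply, ih, Dop_single]
      simp only [mul_one, pow_zero, one_smul, sub_self, zero_mul, zero_smul, add_zero,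
        Nat.mul_zero, mul_zero]
      rw [add_assoc]

lemma Xop_pow (a c b : ℕ) :
    (Xop ^ a) (Finsupp.single (c, b) 1) = Finsupp.single (c + a, b) 1 := by
  induction a with
  | zero => simp
  | succ n ih =>
      rw [pow_succ', Module.End.mul_apply, ih, Xop_single]
      congr 2

lemma Φ_mon (q : ℂ) (p : ℕ × ℕ) : Φ q (mon q p) = Finsupp.single p 1 := by
  rcases p with ⟨a, b⟩
  show (ψ q (Dx q ^ a * Dd q ^ b)) (Finsupp.single (0,0) 1) = _
  rw [map_mul, map_pow, map_pow, ψ_Dx, ψ_Dd, Module.End.mul_apply, Dop_pow]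
  rw [Xop_pow]
  norm_num

lemma linInd_mon (q : ℂ) : LinearIndependent ℂ (mon q) := by
  apply LinearIndependent.of_comp (Φ q)
  have : (⇑(Φ q) ∘ mon q) = fun p : ℕ × ℕ => Finsupp.single p 1 := by
    funext p; exact Φ_mon q p
  rw [this]
  exact (Finsupp.basisSingleOne (R := ℂ) (ι := ℕ × ℕ)).linearIndependent

lemma Dd_mul_Dx (q : ℂ) :
    Dd q * Dx q = q ^ 2 • (Dx q * Dd q) + (q ^ 2 - 1) • 1 := by
  have h := RingQuot.mkAlgHom_rel ℂ (DqRel.rel (q := q))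
  rw [map_mul, map_add, map_smul, map_smul, map_mul, map_one] at h
  exact h

lemma Dd_mul_Dx_pow' (q : ℂ) (a : ℕ) :
    Dd q * Dx q ^ (a + 1)
      = q ^ (2 * (a + 1)) • (Dx q ^ (a + 1) * Dd q)
        + (q ^ (2 * (a + 1)) - 1) • Dx q ^ a := by
  induction a with
  | zero => simpa using Dd_mul_Dx q
  | succ n ih =>
      have : Dx q ^ (n + 1 + 1) = Dx q ^ (n + 1) * Dx q := pow_succ _ _
      rw [this, ← mul_assoc, ih, add_mul, smul_mul_assoc, smul_mul_assoc,
        mul_assoc, Dd_mul_Dx]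
      simp only [mul_add, mul_smul_comm, mul_one, smul_add, smul_smul,
        ← mul_assoc, ← pow_succ]
      match_scalars <;> ring

lemma Dd_mul_Dx_pow (q : ℂ) (a : ℕ) :
    Dd q * Dx q ^ a
      = q ^ (2 * a) • (Dx q ^ a * Dd q) + (q ^ (2 * a) - 1) • Dx q ^ (a - 1) := by
  rcases a with _ | a
  · simp
  · exact Dd_mul_Dx_pow' q a

lemma adjoin_xd (q : ℂ) : Algebra.adjoin ℂ {Dx q, Dd q} = ⊤ := by
  have h1 : Algebra.adjoin ℂ (Set.range (FreeAlgebra.ι ℂ (X := Bool))) = ⊤ :=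
    FreeAlgebra.adjoin_range_ι ℂ Bool
  have h2 : Set.range (FreeAlgebra.ι ℂ (X := Bool))
      = {FreeAlgebra.ι ℂ false, FreeAlgebra.ι ℂ true} := by
    ext u; constructor
    · rintro ⟨b, rfl⟩; cases b <;> simp
    · rintro (rfl | rfl) <;> exact ⟨_, rfl⟩
  have h3 := AlgHom.map_adjoin (RingQuot.mkAlgHom ℂ (DqRel q))
    {FreeAlgebra.ι ℂ false, FreeAlgebra.ι ℂ true}
  rw [← h2, h1] at h3
  have h4 : Subalgebra.map (RingQuot.mkAlgHom ℂ (DqRel q)) ⊤ = ⊤ := by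
    rw [Algebra.map_top, AlgHom.range_eq_top]
    exact RingQuot.mkAlgHom_surjective ℂ _
  rw [h4, h2] at h3
  have h5 : (⇑(RingQuot.mkAlgHom ℂ (DqRel q))
      '' {FreeAlgebra.ι ℂ false, FreeAlgebra.ι ℂ true}) = {Dx q, Dd q} := by
    simp [Set.image_insert_eq, Dx, Dd]
  rw [h5] at h3
  exact h3.symm

def STq (q : ℂ) : Submodule ℂ (Dq q) := Submodule.span ℂ (Set.range (mon q))

lemma mon_mem_STq (q : ℂ) (p : ℕ × ℕ) : mon q p ∈ STq q :=
  Submodule.subset_span ⟨p, rfl⟩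

lemma STq_top (q : ℂ) : STq q = ⊤ := by
  have hx : ∀ v ∈ STq q, Dx q * v ∈ STq q := by
    intro v hv
    refine Submodule.span_induction ?_ ?_ ?_ ?_ hv
    · rintro _ ⟨⟨a, b⟩, rfl⟩
      have : Dx q * mon q (a, b) = mon q (a + 1, b) := by
        rw [mon, mon, ← mul_assoc, ← pow_succ']
      rw [this]; exact mon_mem_STq q _
    · simp
    · intro u w _ _ hu hw; rw [mul_add]; exact add_mem hu hw
    · intro c u _ hu; rw [mul_smul_comm]; exact Submodule.smul_mem _ _ hu
  have hd : ∀ v ∈ STq q, Dd q * v ∈ STq q := by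
    intro v hv
    refine Submodule.span_induction ?_ ?_ ?_ ?_ hv
    · rintro _ ⟨⟨a, b⟩, rfl⟩
      have : Dd q * mon q (a, b)
          = q ^ (2 * a) • mon q (a, b + 1) + (q ^ (2 * a) - 1) • mon q (a - 1, b) := by
        rw [mon, mon, mon, ← mul_assoc, Dd_mul_Dx_pow, add_mul, smul_mul_assoc,
          smul_mul_assoc, mul_assoc, ← pow_succ']
      rw [this]
      exact add_mem (Submodule.smul_mem _ _ (mon_mem_STq q _))
        (Submodule.smul_mem _ _ (mon_mem_STq q _))
    · simp
    · intro u w _ _ hu hw; rw [mul_add]; exact add_mem hu hw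
    · intro c u _ hu; rw [mul_smul_comm]; exact Submodule.smul_mem _ _ hu
  have key : ∀ u : Dq q, ∀ v ∈ STq q, u * v ∈ STq q := by
    intro u
    have hu : u ∈ Algebra.adjoin ℂ {Dx q, Dd q} := by rw [adjoin_xd]; trivial
    refine Algebra.adjoin_induction ?_ ?_ ?_ ?_ hu
    · rintro y (rfl | rfl)
      · exact hx
      · exact hd
    · intro r v hv
      rw [← Algebra.smul_def]
      exact Submodule.smul_mem _ _ hv
    · intro y z _ _ hy hz v hv
      rw [add_mul]; exact add_mem (hy v hv) (hz v hv)
    · intro y z _ _ hy hz v hv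
      rw [mul_assoc]; exact hy _ (hz v hv)
  rw [eq_top_iff]
  intro u _
  have h1 : (1 : Dq q) ∈ STq q := by
    have := mon_mem_STq q (0, 0)
    simpa [mon] using this
  simpa using key u 1 h1

def Bq (q : ℂ) : Module.Basis (ℕ × ℕ) ℂ (Dq q) :=
  Module.Basis.mk (linInd_mon q) (by rw [← STq]; exact (STq_top q).ge)

lemma Bq_repr_mon (q : ℂ) (p : ℕ × ℕ) :
    (Bq q).repr (mon q p) = Finsupp.single p 1 := by
  rw [← Module.Basis.mk_apply (linInd_mon q) (by rw [← STq]; exact (STq_top q).ge) p]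
  exact (Bq q).repr_self p

def monL (q : ℂ) (ℓ : ℕ) (p : ℕ × ℕ) : Dq q := mon q (ℓ * p.1, ℓ * p.2)

def emb (ℓ m k : ℕ) : ℕ × ℕ → ℕ × ℕ := fun p => (ℓ * p.1 + m, ℓ * p.2 + k)

lemma emb_inj {ℓ : ℕ} (hℓ : 0 < ℓ) (m k : ℕ) : Function.Injective (emb ℓ m k) := by
  rintro ⟨a, b⟩ ⟨a', b'⟩ h
  simp only [emb, Prod.mk.injEq] at h ⊢
  exact ⟨Nat.eq_of_mul_eq_mul_left hℓ (Nat.add_right_cancel h.1),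
    Nat.eq_of_mul_eq_mul_left hℓ (Nat.add_right_cancel h.2)⟩

def πmk (q : ℂ) {ℓ : ℕ} (hℓ : 0 < ℓ) (m k : ℕ) : Dq q →ₗ[ℂ] Dq q :=
  (Finsupp.linearCombination ℂ (monL q ℓ)) ∘ₗ
    (Finsupp.lcomapDomain (emb ℓ m k) (emb_inj hℓ m k)) ∘ₗ
      ((Bq q).repr : Dq q →ₗ[ℂ] ((ℕ × ℕ) →₀ ℂ))

section Center

variable {q : ℂ} {ℓ : ℕ}

-- commutation of central powers
lemma comm_dd (hcenter : Subalgebra.center ℂ (Dq q)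
      = Algebra.adjoin ℂ {(Dx q) ^ ℓ, (Dd q) ^ ℓ}) (u : Dq q) (b : ℕ) :
    Commute u (Dd q ^ (ℓ * b)) := by
  have hdc : Dd q ^ ℓ ∈ Subalgebra.center ℂ (Dq q) := by
    rw [hcenter]; exact Algebra.subset_adjoin (by simp)
  have h : Commute u (Dd q ^ ℓ) := Subalgebra.mem_center_iff.mp hdc u
  rw [pow_mul]
  exact h.pow_right b

lemma monL_mul_mon (hcenter : Subalgebra.center ℂ (Dq q)
      = Algebra.adjoin ℂ {(Dx q) ^ ℓ, (Dd q) ^ ℓ}) (a b c d : ℕ) :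
    mon q (ℓ * a, ℓ * b) * mon q (c, d) = mon q (ℓ * a + c, ℓ * b + d) := by
  have h : Commute (Dx q ^ c) (Dd q ^ (ℓ * b)) :=
    ((comm_dd hcenter (Dx q) b).pow_left c)
  show Dx q ^ (ℓ * a) * Dd q ^ (ℓ * b) * (Dx q ^ c * Dd q ^ d) = _
  rw [mul_assoc, ← mul_assoc (Dd q ^ (ℓ * b)) (Dx q ^ c) (Dd q ^ d), ← h.eq,
    mul_assoc (Dx q ^ c), ← mul_assoc (Dx q ^ (ℓ * a)), ← pow_add, ← pow_add]
  rfl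

lemma monL_mem_center (hcenter : Subalgebra.center ℂ (Dq q)
      = Algebra.adjoin ℂ {(Dx q) ^ ℓ, (Dd q) ^ ℓ}) (p : ℕ × ℕ) :
    monL q ℓ p ∈ Subalgebra.center ℂ (Dq q) := by
  rw [hcenter]
  have : monL q ℓ p = ((Dx q) ^ ℓ) ^ p.1 * ((Dd q) ^ ℓ) ^ p.2 := by
    rw [monL, mon, pow_mul, pow_mul]
  rw [this]
  exact mul_mem (pow_mem (Algebra.subset_adjoin (by simp)) _)
    (pow_mem (Algebra.subset_adjoin (by simp)) _)

lemma center_le_span (hcenter : Subalgebra.center ℂ (Dq q)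
      = Algebra.adjoin ℂ {(Dx q) ^ ℓ, (Dd q) ^ ℓ}) {z : Dq q}
    (hz : z ∈ Subalgebra.center ℂ (Dq q)) :
    z ∈ Submodule.span ℂ (Set.range (monL q ℓ)) := by
  rw [hcenter] at hz
  refine Algebra.adjoin_induction ?_ ?_ ?_ ?_ hz
  · rintro y (rfl | rfl)
    · refine Submodule.subset_span ⟨(1, 0), ?_⟩
      simp [monL, mon]
    · refine Submodule.subset_span ⟨(0, 1), ?_⟩
      simp [monL, mon]
  · intro r
    have h1 : (algebraMap ℂ (Dq q)) r = r • monL q ℓ (0, 0) := by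
      simp [monL, mon, Algebra.algebraMap_eq_smul_one]
    rw [h1]
    exact Submodule.smul_mem _ _ (Submodule.subset_span ⟨(0, 0), rfl⟩)
  · intro y z _ _ hy hz; exact add_mem hy hz
  · intro y z _ _ hy hz
    have := Submodule.mul_mem_mul hy hz
    rw [Submodule.span_mul_span] at this
    refine Submodule.span_le.mpr ?_ this
    rintro _ ⟨_, ⟨p, rfl⟩, _, ⟨p', rfl⟩, rfl⟩
    have h2 : monL q ℓ p * monL q ℓ p' = monL q ℓ (p.1 + p'.1, p.2 + p'.2) := by
      rw [monL, monL, monL, monL_mul_mon hcenter, Nat.mul_add, Nat.mul_add]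
    show monL q ℓ p * monL q ℓ p' ∈ _
    rw [h2]
    exact Submodule.subset_span ⟨_, rfl⟩

end Center

lemma πmk_mon {q : ℂ} {ℓ : ℕ} (hℓ : 0 < ℓ) (m k m' k' : ℕ)
    (hm : m < ℓ) (hk : k < ℓ) (hm' : m' < ℓ) (hk' : k' < ℓ) (a b : ℕ) :
    πmk q hℓ m k (mon q (ℓ * a + m', ℓ * b + k'))
      = if m' = m ∧ k' = k then monL q ℓ (a, b) else 0 := by
  rw [πmk]
  simp only [LinearMap.comp_apply, LinearMap.coe_comp, Function.comp_apply,
    LinearEquiv.coe_coe]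
  rw [Bq_repr_mon]
  by_cases h : m' = m ∧ k' = k
  · obtain ⟨rfl, rfl⟩ := h
    have he : ((ℓ * a + m', ℓ * b + k') : ℕ × ℕ) = emb ℓ m' k' (a, b) := rfl
    rw [he, if_pos ⟨rfl, rfl⟩]
    show Finsupp.linearCombination ℂ (monL q ℓ)
      (Finsupp.comapDomain _ (Finsupp.single (emb ℓ m' k' (a, b)) 1) _) = _
    rw [Finsupp.comapDomain_single, Finsupp.linearCombination_single, one_smul]
  · rw [if_neg h]
    have hz : Finsupp.comapDomain (emb ℓ m k)
        (Finsupp.single ((ℓ * a + m', ℓ * b + k') : ℕ × ℕ) (1 : ℂ))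
        ((emb_inj hℓ m k).injOn) = 0 := by
      ext p
      rw [Finsupp.comapDomain_apply]
      apply Finsupp.single_eq_of_ne
      intro hcon
      apply h
      have h1 : ℓ * a + m' = ℓ * p.1 + m := (congrArg Prod.fst hcon).symm
      have h2 : ℓ * b + k' = ℓ * p.2 + k := (congrArg Prod.snd hcon).symm
      constructor
      · have := congrArg (fun n => n % ℓ) h1
        simpa [Nat.add_mul_mod_self_left, Nat.mod_eq_of_lt hm, Nat.mod_eq_of_lt hm',
          Nat.mul_add_mod] using this
      · have := congrArg (fun n => n % ℓ) h2
        simpa [Nat.add_mul_mod_self_left, Nat.mod_eq_of_lt hk, Nat.mod_eq_of_lt hk',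
          Nat.mul_add_mod] using this
    show Finsupp.linearCombination ℂ (monL q ℓ)
      (Finsupp.comapDomain _ (Finsupp.single _ 1) _) = _
    rw [hz, map_zero]

lemma πmk_mul {q : ℂ} {ℓ : ℕ} (hℓ : 0 < ℓ)
    (hcenter : Subalgebra.center ℂ (Dq q)
      = Algebra.adjoin ℂ {(Dx q) ^ ℓ, (Dd q) ^ ℓ})
    (m k : Fin ℓ) (i' : Fin ℓ × Fin ℓ) {z : Dq q}
    (hz : z ∈ Submodule.span ℂ (Set.range (monL q ℓ))) :
    πmk q hℓ m k (z * mon q ((i'.1 : ℕ), (i'.2 : ℕ)))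
      = (if i' = (m, k) then (1 : ℂ) else 0) • z := by
  refine Submodule.span_induction ?_ ?_ ?_ ?_ hz
  · rintro _ ⟨⟨a, b⟩, rfl⟩
    have h1 : monL q ℓ (a, b) * mon q ((i'.1 : ℕ), (i'.2 : ℕ))
        = mon q (ℓ * a + (i'.1 : ℕ), ℓ * b + (i'.2 : ℕ)) :=
      monL_mul_mon hcenter a b _ _
    rw [h1, πmk_mon hℓ m k i'.1 i'.2 m.isLt k.isLt i'.1.isLt i'.2.isLt a b]
    by_cases h : i' = (m, k)
    · obtain rfl : i' = (m, k) := h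
      rw [if_pos ⟨rfl, rfl⟩, if_pos rfl, one_smul]
    · rw [if_neg, if_neg h, zero_smul]
      intro hcon
      exact h (Prod.ext (Fin.ext hcon.1) (Fin.ext hcon.2))
  · simp
  · intro u w _ _ hu hw
    rw [add_mul, map_add, hu, hw, smul_add]
  · intro c u _ hu
    rw [smul_mul_assoc, map_smul, hu, smul_comm]


set_option maxSynthPendingDepth 3
set_option maxHeartbeats 1000000

/-- if `q` is a primitive ℓ-th root of unity with `ℓ > 1` odd, then
`D_q(ℂ)` is a free module of rank `ℓ²` over its center (the polynomial subalgebra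
`ℂ[x^ℓ, ∂^ℓ]`), with basis the ordered monomials `xᵐ∂ᵏ`, `0 ≤ m, k ≤ ℓ−1`. -/
theorem dq_free_over_center (q : ℂ) (ℓ : ℕ) (hℓ : 1 < ℓ) (hodd : Odd ℓ)
    (hq : IsPrimitiveRoot q ℓ)
    (hcenter : Subalgebra.center ℂ (Dq q) = Algebra.adjoin ℂ {(Dx q) ^ ℓ, (Dd q) ^ ℓ}) :
    ∃ b : Module.Basis (Fin ℓ × Fin ℓ) ↥(Subalgebra.center ℂ (Dq q)) (Dq q),
      ∀ mk : Fin ℓ × Fin ℓ, b mk = (Dx q) ^ (mk.1 : ℕ) * (Dd q) ^ (mk.2 : ℕ) := by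
  have hℓ0 : 0 < ℓ := by omega
  set Z := Subalgebra.center ℂ (Dq q) with hZ
  set f : Fin ℓ × Fin ℓ → Dq q := fun i => (Dx q) ^ (i.1 : ℕ) * (Dd q) ^ (i.2 : ℕ)
    with hf
  have hfmon : ∀ i : Fin ℓ × Fin ℓ, f i = mon q ((i.1 : ℕ), (i.2 : ℕ)) := fun i => rfl
  -- spanning over the center
  have hspan : ⊤ ≤ Submodule.span ↥Z (Set.range f) := by
    intro u _
    have hu : u ∈ STq q := by rw [STq_top]; trivial
    refine Submodule.span_induction ?_ ?_ ?_ ?_ hu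
    · rintro _ ⟨⟨a, b⟩, rfl⟩
      have hzmem : monL q ℓ (a / ℓ, b / ℓ) ∈ Z := monL_mem_center hcenter _
      have key : (⟨monL q ℓ (a / ℓ, b / ℓ), hzmem⟩ : ↥Z)
          • f (⟨a % ℓ, Nat.mod_lt a hℓ0⟩, ⟨b % ℓ, Nat.mod_lt b hℓ0⟩) = mon q (a, b) := by
        have h2 : monL q ℓ (a / ℓ, b / ℓ) * mon q (a % ℓ, b % ℓ)
            = mon q (ℓ * (a / ℓ) + a % ℓ, ℓ * (b / ℓ) + b % ℓ) :=
          monL_mul_mon hcenter _ _ _ _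
        have h3 : (⟨monL q ℓ (a / ℓ, b / ℓ), hzmem⟩ : ↥Z)
            • f (⟨a % ℓ, Nat.mod_lt a hℓ0⟩, ⟨b % ℓ, Nat.mod_lt b hℓ0⟩)
            = monL q ℓ (a / ℓ, b / ℓ) * mon q (a % ℓ, b % ℓ) := rfl
        rw [h3, h2, Nat.div_add_mod, Nat.div_add_mod]
      rw [← key]
      exact Submodule.smul_mem _ _ (Submodule.subset_span ⟨_, rfl⟩)
    · exact zero_mem _
    · intro u w _ _ hu hw; exact add_mem hu hw
    · intro c u _ hu
      have hcu : c • u = (c • (1 : ↥Z)) • u := by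
        rw [smul_assoc, one_smul]
      rw [hcu]
      exact Submodule.smul_mem _ _ hu
  -- linear independence over the center
  have hli : LinearIndependent ↥Z f := by
    refine (Fintype.linearIndependent_iff (R := ↥Z) (v := f)).mpr fun g hg i => ?_
    obtain ⟨m, k⟩ := i
    have h0 : πmk q hℓ0 m k (∑ i' : Fin ℓ × Fin ℓ, g i' • f i') = 0 := by
      rw [hg, map_zero]
    rw [map_sum] at h0
    have hterm : ∀ i' : Fin ℓ × Fin ℓ,
        πmk q hℓ0 m k (g i' • f i')
          = (if i' = (m, k) then (1 : ℂ) else 0) • ((g i' : Dq q)) := by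
      intro i'
      have : g i' • f i' = (g i' : Dq q) * mon q ((i'.1 : ℕ), (i'.2 : ℕ)) := rfl
      rw [this]
      exact πmk_mul hℓ0 hcenter m k i' (center_le_span hcenter (g i').2)
    rw [Finset.sum_congr rfl (fun i' _ => hterm i')] at h0
    have h1 : (∑ i' : Fin ℓ × Fin ℓ,
        (if i' = (m, k) then (1 : ℂ) else 0) • ((g i' : Dq q)))
          = (g (m, k) : Dq q) := by
      rw [Finset.sum_eq_single (m, k)]
      · rw [if_pos rfl, one_smul]
      · intro i' _ hne; rw [if_neg hne, zero_smul]
      · intro h; exact absurd (Finset.mem_univ _) h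
    rw [h1] at h0
    exact Subtype.ext h0
  refine ⟨Module.Basis.mk hli hspan, fun mk => ?_⟩
  rw [Module.Basis.mk_apply]
end
end
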